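/- Let $\lambda_1 < \lambda_2 < \cdots < \lambda_n$ be real numbers and $\mu_1, \dots, \mu_n$ real numbers, and define the polynomial $p(\lambda) = \prod_{k=1}^{n}(\lambda - \lambda_k) - \sum_{j=1}^{n} \mu_j \prod_{k \ne j}(\lambda - \lambda_k)$. Then for each $1 \le i \le n-1$: $p(\lambda_i) \cdot p(\lambda_{i+1}) = \mu_i \, \mu_{i+1} \prod_{k \ne i}(\lambda_i - \lambda_k) \prod_{k \ne i+1}(\lambda_{i+1} - \lambda_k)$, and the quantity $\prod_{k \ne i}(\lambda_i - \lambda_k) \prod_{k \ne i+1}(\lambda_{i+1} - \lambda_k)$ is strictly negative. Consequently, if $\mu_i \mu_{i+1} > 0$ then $p(\lambda_i) p(\lambda_{i+1}) < 0$, and if $\mu_i \mu_{i+1} < 0$ then $p(\lambda_i) p(\lambda_{i+1}) > 0$. -/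
import Mathlib


open Finset

lemma secular_eval_at_pole (n : ℕ) (lam μ : Fin n → ℝ) (p : ℝ → ℝ)
    (hp : ∀ x, p x = ∏ k, (x - lam k) - ∑ j, μ j * ∏ k ∈ univ.erase j, (x - lam k))
    (i : Fin n) :
    p (lam i) = -(μ i * ∏ k ∈ univ.erase i, (lam i - lam k)) := by
  rw [hp]
  rw [Finset.prod_eq_zero (Finset.mem_univ i) (by simp)]
  rw [Finset.sum_eq_single i]
  · ring
  · intro b _ hb
    rw [Finset.prod_eq_zero (Finset.mem_erase.mpr ⟨hb.symm, Finset.mem_univ i⟩) (by simp)]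
    ring
  · simp

/-- For the polynomial form `p(λ) = ∏ₖ (λ - λₖ) - ∑ⱼ μⱼ ∏_{k ≠ j} (λ - λₖ)` of a
secular function, the product `p(λᵢ) p(λᵢ₊₁)` equals
`μᵢ μᵢ₊₁ ∏_{k≠i}(λᵢ - λₖ) ∏_{k≠i+1}(λᵢ₊₁ - λₖ)`, the latter double product is
strictly negative, and consequently the sign of `p(λᵢ) p(λᵢ₊₁)` is opposite to
that of `μᵢ μᵢ₊₁`. -/
theorem secular_polynomial_sign_at_consecutive_poles (n : ℕ) (lam μ : Fin n → ℝ)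
    (hlam : StrictMono lam) (p : ℝ → ℝ)
    (hp : ∀ x, p x = ∏ k, (x - lam k) - ∑ j, μ j * ∏ k ∈ univ.erase j, (x - lam k))
    (i j : Fin n) (hij : (j : ℕ) = (i : ℕ) + 1) :
    p (lam i) * p (lam j) =
        μ i * μ j *
          ((∏ k ∈ univ.erase i, (lam i - lam k)) * ∏ k ∈ univ.erase j, (lam j - lam k)) ∧
      ((∏ k ∈ univ.erase i, (lam i - lam k)) * ∏ k ∈ univ.erase j, (lam j - lam k)) < 0 ∧
      (μ i * μ j > 0 → p (lam i) * p (lam j) < 0) ∧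
      (μ i * μ j < 0 → p (lam i) * p (lam j) > 0) := by
  have hij' : i < j := by
    rw [Fin.lt_def]; omega
  have hne : i ≠ j := ne_of_lt hij'
  have hA : p (lam i) = -(μ i * ∏ k ∈ univ.erase i, (lam i - lam k)) :=
    secular_eval_at_pole n lam μ p hp i
  have hB : p (lam j) = -(μ j * ∏ k ∈ univ.erase j, (lam j - lam k)) :=
    secular_eval_at_pole n lam μ p hp j
  have heq : p (lam i) * p (lam j) =
      μ i * μ j *
        ((∏ k ∈ univ.erase i, (lam i - lam k)) * ∏ k ∈ univ.erase j, (lam j - lam k)) := by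
    rw [hA, hB]; ring
  have hjmem : j ∈ univ.erase i := Finset.mem_erase.mpr ⟨hne.symm, Finset.mem_univ j⟩
  have himem : i ∈ univ.erase j := Finset.mem_erase.mpr ⟨hne, Finset.mem_univ i⟩
  have hAsplit : ∏ k ∈ univ.erase i, (lam i - lam k)
      = (lam i - lam j) * ∏ k ∈ (univ.erase i).erase j, (lam i - lam k) :=
    (Finset.mul_prod_erase _ _ hjmem).symm
  have hBsplit : ∏ k ∈ univ.erase j, (lam j - lam k)
      = (lam j - lam i) * ∏ k ∈ (univ.erase i).erase j, (lam j - lam k) := by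
    rw [← Finset.mul_prod_erase _ _ himem, Finset.erase_right_comm]
  have hposfactor : ∀ k ∈ (univ.erase i).erase j,
      0 < (lam i - lam k) * (lam j - lam k) := by
    intro k hk
    have hkj : k ≠ j := (Finset.mem_erase.mp hk).1
    have hki : k ≠ i := (Finset.mem_erase.mp (Finset.mem_erase.mp hk).2).1
    have : (k : ℕ) < (i : ℕ) ∨ (j : ℕ) < (k : ℕ) := by
      have h1 : (k : ℕ) ≠ (i : ℕ) := fun h => hki (Fin.ext h)
      have h2 : (k : ℕ) ≠ (j : ℕ) := fun h => hkj (Fin.ext h)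
      omega
    rcases this with h | h
    · have hik : lam k < lam i := hlam (by rwa [Fin.lt_def])
      have hjk : lam k < lam j := hlam (by rw [Fin.lt_def]; omega)
      exact mul_pos (by linarith) (by linarith)
    · have hik : lam j < lam k := hlam (by rwa [Fin.lt_def])
      have hjk : lam i < lam k := hlam (by rw [Fin.lt_def]; omega)
      exact mul_pos_of_neg_of_neg (by linarith) (by linarith)
  have hprodpos : 0 < ∏ k ∈ (univ.erase i).erase j, (lam i - lam k) * (lam j - lam k) :=
    Finset.prod_pos hposfactor
  have hlij : lam i < lam j := hlam hij'
  have hneg : ((∏ k ∈ univ.erase i, (lam i - lam k)) *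
      ∏ k ∈ univ.erase j, (lam j - lam k)) < 0 := by
    rw [hAsplit, hBsplit]
    have : (lam i - lam j) * (∏ k ∈ (univ.erase i).erase j, (lam i - lam k)) *
        ((lam j - lam i) * ∏ k ∈ (univ.erase i).erase j, (lam j - lam k))
        = ((lam i - lam j) * (lam j - lam i)) *
          ∏ k ∈ (univ.erase i).erase j, (lam i - lam k) * (lam j - lam k) := by
      rw [Finset.prod_mul_distrib]; ring
    rw [this]
    exact mul_neg_of_neg_of_pos
      (mul_neg_of_neg_of_pos (by linarith) (by linarith)) hprodpos
  refine ⟨heq, hneg, ?_, ?_⟩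
  · intro h; rw [heq]; exact mul_neg_of_pos_of_neg h hneg
  · intro h; rw [heq]; exact mul_pos_of_neg_of_neg h hneg
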